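/- Let (wᵢ)_{i ∈ ℕ} be a sequence of continuously differentiable functions ℝ → ℝ such that each wᵢ and wᵢ' is square integrable on ℝ and wᵢ(x) → 0 as x → ±∞, and let u : ℝ → ℝ be square integrable. Then Σ_{i ∈ ℕ} ( ∫_ℝ u(x)² wᵢ(x) dx )² ≤ ‖u‖_{L²(ℝ)}⁴ · Σ_{i ∈ ℕ} ‖wᵢ‖_{L²(ℝ)} ‖wᵢ'‖_{L²(ℝ)}. -/

import Mathlib

open MeasureTheory Filter

private lemma agmon_aux (g : ℝ → ℝ) (hg : ContDiff ℝ 1 g)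
    (hg2 : Integrable (fun x => (g x) ^ 2))
    (hg'2 : Integrable (fun x => (deriv g x) ^ 2))
    (htop : Tendsto g atTop (nhds 0))
    (hbot : Tendsto g atBot (nhds 0)) (a : ℝ) :
    g a ^ 2 ≤ Real.sqrt (∫ x, (g x) ^ 2) * Real.sqrt (∫ x, (deriv g x) ^ 2) := by
  have hgc : Continuous g := hg.continuous
  have hg'c : Continuous (deriv g) := hg.continuous_deriv le_rfl
  -- integrability of |g| * |g'|
  have habs : Integrable (fun x => |g x| * |deriv g x|) := by
    refine Integrable.mono' ((hg2.add hg'2).div_const 2)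
      ((hgc.abs.mul hg'c.abs).aestronglyMeasurable) ?_
    refine Filter.Eventually.of_forall fun x => ?_
    simp only [Real.norm_eq_abs, Pi.add_apply]
    rw [abs_of_nonneg (by positivity)]
    nlinarith [sq_abs (g x), sq_abs (deriv g x), sq_nonneg (|g x| - |deriv g x|)]
  have hgg' : Integrable (fun x => 2 * (g x * deriv g x)) := by
    refine (Integrable.const_mul ?_ 2)
    refine habs.mono' ((hgc.mul hg'c).aestronglyMeasurable) ?_
    refine Filter.Eventually.of_forall fun x => ?_
    simp only [Real.norm_eq_abs, abs_mul]
    exact le_of_eq rfl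
  have hderiv : ∀ x : ℝ, HasDerivAt (fun y => g y ^ 2) (2 * (g x * deriv g x)) x := by
    intro x
    have h : HasDerivAt (fun y => g y ^ 2) _ x := ((hg.differentiable one_ne_zero x).hasDerivAt).pow 2
    simpa [mul_assoc, mul_comm, mul_left_comm] using h
  have htop2 : Tendsto (fun y => g y ^ 2) atTop (nhds 0) := by
    have := htop.pow 2; simpa using this
  have hbot2 : Tendsto (fun y => g y ^ 2) atBot (nhds 0) := by
    have := hbot.pow 2; simpa using this
  have hIic : ∫ x in Set.Iic a, 2 * (g x * deriv g x) = g a ^ 2 - 0 :=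
    integral_Iic_of_hasDerivAt_of_tendsto' (fun x _ => hderiv x) hgg'.integrableOn hbot2
  have hIoi : ∫ x in Set.Ioi a, 2 * (g x * deriv g x) = 0 - g a ^ 2 :=
    integral_Ioi_of_hasDerivAt_of_tendsto' (fun x _ => hderiv x) hgg'.integrableOn htop2
  -- 2 * g a ^ 2 ≤ ∫ |2 g g'|
  have e1 : (∫ x in Set.Iic a, 2 * (|g x| * |deriv g x|))
      + (∫ x in Set.Ioi a, 2 * (|g x| * |deriv g x|))
      = ∫ x, 2 * (|g x| * |deriv g x|) :=
    intervalIntegral.integral_Iic_add_Ioi (habs.const_mul 2).integrableOn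
      (habs.const_mul 2).integrableOn
  have hptIic : ∫ x in Set.Iic a, 2 * (g x * deriv g x)
      ≤ ∫ x in Set.Iic a, 2 * (|g x| * |deriv g x|) := by
    refine integral_mono hgg'.integrableOn (habs.const_mul 2).integrableOn fun x => ?_
    have : g x * deriv g x ≤ |g x| * |deriv g x| := by
      rw [← abs_mul]; exact le_abs_self _
    linarith
  have hneg : ∫ x in Set.Ioi a, -(2 * (g x * deriv g x)) = -(0 - g a ^ 2) := by
    rw [integral_neg, hIoi]
  have hptIoi : ∫ x in Set.Ioi a, -(2 * (g x * deriv g x))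
      ≤ ∫ x in Set.Ioi a, 2 * (|g x| * |deriv g x|) := by
    refine integral_mono hgg'.integrableOn.neg (habs.const_mul 2).integrableOn fun x => ?_
    have : -(g x * deriv g x) ≤ |g x| * |deriv g x| := by
      rw [← abs_mul]; exact neg_le_abs _
    simp only [Pi.neg_apply]
    linarith
  have hkey : 2 * g a ^ 2 ≤ ∫ x, 2 * (|g x| * |deriv g x|) := by
    linarith [hIic, hneg, hptIic, hptIoi, e1]
  -- Cauchy-Schwarz
  have hCS : ∫ x, |g x| * |deriv g x|
      ≤ Real.sqrt (∫ x, (g x) ^ 2) * Real.sqrt (∫ x, (deriv g x) ^ 2) := by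
    have hpq : Real.HolderConjugate 2 2 := Real.HolderConjugate.two_two
    have hmf : MemLp (fun x => |g x|) (ENNReal.ofReal (2:ℝ)) (volume : Measure ℝ) := by
      rw [show ENNReal.ofReal (2:ℝ) = 2 by norm_num]
      rw [memLp_two_iff_integrable_sq hgc.abs.aestronglyMeasurable]
      simpa [sq_abs] using hg2
    have hmg : MemLp (fun x => |deriv g x|) (ENNReal.ofReal (2:ℝ)) (volume : Measure ℝ) := by
      rw [show ENNReal.ofReal (2:ℝ) = 2 by norm_num]
      rw [memLp_two_iff_integrable_sq hg'c.abs.aestronglyMeasurable]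
      simpa [sq_abs] using hg'2
    have h := integral_mul_le_Lp_mul_Lq_of_nonneg hpq
      (Filter.Eventually.of_forall fun x => abs_nonneg (g x))
      (Filter.Eventually.of_forall fun x => abs_nonneg (deriv g x)) hmf hmg
    have e2 : ∀ x : ℝ, |g x| ^ (2:ℝ) = g x ^ 2 := fun x => by
      rw [show ((2:ℝ)) = ((2:ℕ):ℝ) by norm_num, Real.rpow_natCast, sq_abs]
    have e3 : ∀ x : ℝ, |deriv g x| ^ (2:ℝ) = deriv g x ^ 2 := fun x => by
      rw [show ((2:ℝ)) = ((2:ℕ):ℝ) by norm_num, Real.rpow_natCast, sq_abs]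
    calc ∫ x, |g x| * |deriv g x|
        ≤ (∫ x, |g x| ^ (2:ℝ)) ^ ((1:ℝ)/2) * (∫ x, |deriv g x| ^ (2:ℝ)) ^ ((1:ℝ)/2) := h
      _ = Real.sqrt (∫ x, (g x) ^ 2) * Real.sqrt (∫ x, (deriv g x) ^ 2) := by
          simp only [e2, e3]
          rw [Real.sqrt_eq_rpow, Real.sqrt_eq_rpow]
  have h2 : ∫ x, 2 * (|g x| * |deriv g x|) = 2 * ∫ x, |g x| * |deriv g x| :=
    integral_const_mul 2 _
  linarith [hkey, hCS]

/-- Bound on the quadratic variation of the stochastic integral (u², Φ dW):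
    Σᵢ (∫ u² wᵢ)² ≤ ‖u‖₂⁴ Σᵢ ‖wᵢ‖₂ ‖wᵢ'‖₂, with both sums taken in [0,∞]. -/
theorem quadratic_variation_bound
    (w : ℕ → ℝ → ℝ)
    (hw : ∀ i, ContDiff ℝ 1 (w i))
    (hw2 : ∀ i, Integrable (fun x => (w i x) ^ 2))
    (hw'2 : ∀ i, Integrable (fun x => (deriv (w i) x) ^ 2))
    (htop : ∀ i, Tendsto (w i) atTop (nhds 0))
    (hbot : ∀ i, Tendsto (w i) atBot (nhds 0))
    (u : ℝ → ℝ) (hu2 : Integrable (fun x => (u x) ^ 2)) :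
    ∑' i : ℕ, ENNReal.ofReal ((∫ x, (u x) ^ 2 * w i x) ^ 2)
      ≤ ENNReal.ofReal ((Real.sqrt (∫ x, (u x) ^ 2)) ^ 4) *
          ∑' i : ℕ, ENNReal.ofReal
            (Real.sqrt (∫ x, (w i x) ^ 2) * Real.sqrt (∫ x, (deriv (w i) x) ^ 2)) := by
  rw [← ENNReal.tsum_mul_left]
  refine ENNReal.tsum_le_tsum fun i => ?_
  set C := Real.sqrt (∫ x, (w i x) ^ 2) * Real.sqrt (∫ x, (deriv (w i) x) ^ 2) with hC
  have hC0 : 0 ≤ C := mul_nonneg (Real.sqrt_nonneg _) (Real.sqrt_nonneg _)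
  have hbd : ∀ x, w i x ^ 2 ≤ C :=
    agmon_aux (w i) (hw i) (hw2 i) (hw'2 i) (htop i) (hbot i)
  have hbd' : ∀ x, |w i x| ≤ Real.sqrt C := fun x => by
    rw [← Real.sqrt_sq_eq_abs]
    exact Real.sqrt_le_sqrt (hbd x)
  have hint : Integrable (fun x => (u x) ^ 2 * w i x) := by
    refine Integrable.mono' (hu2.mul_const (Real.sqrt C))
      (hu2.1.mul (hw i).continuous.aestronglyMeasurable)
      (Filter.Eventually.of_forall fun x => ?_)
    rw [Real.norm_eq_abs, abs_mul, abs_of_nonneg (sq_nonneg (u x))]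
    exact mul_le_mul_of_nonneg_left (hbd' x) (sq_nonneg (u x))
  have hu0 : 0 ≤ ∫ x, (u x) ^ 2 := integral_nonneg fun x => sq_nonneg _
  have hI : |∫ x, (u x) ^ 2 * w i x| ≤ Real.sqrt C * ∫ x, (u x) ^ 2 := by
    calc |∫ x, (u x) ^ 2 * w i x| ≤ ∫ x, |(u x) ^ 2 * w i x| := by
          exact
            norm_integral_le_integral_norm (μ := volume) (fun x => (u x) ^ 2 * w i x)
      _ ≤ ∫ x, (u x) ^ 2 * Real.sqrt C := by
          refine integral_mono hint.abs (hu2.mul_const _) fun x => ?_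
          rw [abs_mul, abs_of_nonneg (sq_nonneg (u x))]
          exact mul_le_mul_of_nonneg_left (hbd' x) (sq_nonneg (u x))
      _ = Real.sqrt C * ∫ x, (u x) ^ 2 := by
          rw [integral_mul_const, mul_comm]
  have hsq : (∫ x, (u x) ^ 2 * w i x) ^ 2 ≤ C * (∫ x, (u x) ^ 2) ^ 2 := by
    have h2 : (∫ x, (u x) ^ 2 * w i x) ^ 2 ≤ (Real.sqrt C * ∫ x, (u x) ^ 2) ^ 2 := by
      rw [← sq_abs]
      exact pow_le_pow_left₀ (abs_nonneg _) hI 2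
    calc (∫ x, (u x) ^ 2 * w i x) ^ 2 ≤ (Real.sqrt C * ∫ x, (u x) ^ 2) ^ 2 := h2
      _ = C * (∫ x, (u x) ^ 2) ^ 2 := by rw [mul_pow, Real.sq_sqrt hC0]
  have hfour : (Real.sqrt (∫ x, (u x) ^ 2)) ^ 4 = (∫ x, (u x) ^ 2) ^ 2 := by
    rw [show (4:ℕ) = 2 * 2 by norm_num, pow_mul, Real.sq_sqrt hu0]
  calc ENNReal.ofReal ((∫ x, (u x) ^ 2 * w i x) ^ 2)
      ≤ ENNReal.ofReal ((Real.sqrt (∫ x, (u x) ^ 2)) ^ 4 * C) := by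
        refine ENNReal.ofReal_le_ofReal ?_
        rw [hfour]; linarith [hsq]
    _ = ENNReal.ofReal ((Real.sqrt (∫ x, (u x) ^ 2)) ^ 4) * ENNReal.ofReal C :=
        ENNReal.ofReal_mul (by positivity)
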